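/- Let 1 ≤ a < b ≤ ∞ and 1 ≤ c < d ≤ ∞, let ψ ∈ GΨ(a,b) and ν ∈ GΨ(c,d) be generating functions, let f : (0,1) → ℝ be measurable with ‖f‖_{Gψ(a,b)} < ∞ and let S : (0,1) → [0,∞) be nonnegative integrable with ‖S‖_{Gν(c,d)} < ∞. Then ‖f‖_{[S]} := ∫₀¹ f*(t) S(t) dt ≤ ζ · ‖f‖_{Gψ(a,b)} · ‖S‖_{Gν(c,d)}, where ζ = ζ(a,b;c,d) := inf{ ψ(p) · ν(p') : p ∈ (a,b), p' = p/(p−1) ∈ (c,d) } (with the convention inf over the empty set equals +∞). -/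

import Mathlib

open MeasureTheory Real Set
open scoped ENNReal

/-- The nonincreasing rearrangement of a measurable function `f` on `(0,1)` (with Lebesgue
measure): `f*(t) = inf{σ > 0 : d_f(σ) < t}`. -/
noncomputable def rearr (f : ℝ → ℝ) (t : ℝ) : ℝ :=
  sInf {σ : ℝ | 0 < σ ∧ ((volume.restrict (Set.Ioo (0:ℝ) 1)) {x | σ ≤ |f x|}).toReal < t}

/-- The Grand Lebesgue Space norm `‖f‖_{Gψ(a,b)} = sup_{p ∈ (a,b)} ‖f‖_{L_p} / ψ(p)`
(the upper endpoint `b` may be `∞`). -/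
noncomputable def glsNorm {Ω : Type*} [MeasurableSpace Ω] (μ : Measure Ω)
    (a : ℝ) (b : ℝ≥0∞) (ψ : ℝ → ℝ) (f : Ω → ℝ) : ℝ≥0∞ :=
  ⨆ (p : ℝ) (_ : a < p ∧ ENNReal.ofReal p < b),
    eLpNorm f (ENNReal.ofReal p) μ / ENNReal.ofReal (ψ p)

noncomputable abbrev μr : Measure ℝ := volume.restrict (Set.Ioo (0:ℝ) 1)

lemma mur_ne_top (A : Set ℝ) : μr A ≠ ⊤ := by
  have h1 : μr A ≤ volume (Set.Ioo (0:ℝ) 1) := by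
    calc μr A ≤ μr univ := measure_mono (subset_univ A)
    _ = volume (Set.Ioo (0:ℝ) 1) := Measure.restrict_apply_univ _
  exact ne_top_of_le_ne_top (by simp [Real.volume_Ioo]) h1

lemma rearr_nonneg (f : ℝ → ℝ) (t : ℝ) : 0 ≤ rearr f t :=
  Real.sInf_nonneg fun _ hσ => hσ.1.le

lemma rset_nonempty (f : ℝ → ℝ) (hf : Measurable f) {t : ℝ} (ht : 0 < t) :
    {σ : ℝ | 0 < σ ∧ (μr {x | σ ≤ |f x|}).toReal < t}.Nonempty := by
  set s : ℕ → Set ℝ := fun n => {x | ((n:ℝ)+1) ≤ |f x|} with hs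
  have hanti : Antitone s := by
    intro n m hnm x hx
    simp only [hs, mem_setOf_eq] at hx ⊢
    have : (n:ℝ) + 1 ≤ (m:ℝ) + 1 := by exact_mod_cast add_le_add_left (Nat.cast_le.mpr hnm) 1
    linarith
  have hmeas : ∀ n, NullMeasurableSet (s n) μr := fun n =>
    ((measurableSet_le measurable_const hf.abs)).nullMeasurableSet
  have hempty : ⋂ n, s n = ∅ := by
    ext x
    simp only [mem_iInter, mem_setOf_eq, mem_empty_iff_false, iff_false, not_forall, not_le]
    obtain ⟨n, hn⟩ := exists_nat_gt (|f x|)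
    exact ⟨n, fun hmem => by simp only [hs, mem_setOf_eq] at hmem; linarith⟩
  have hfin : ∃ n, μr (s n) ≠ ⊤ := ⟨0, mur_ne_top _⟩
  have hkey : (⨅ n, μr (s n)) = 0 := by
    rw [← Antitone.measure_iInter hanti hmeas hfin, hempty, measure_empty]
  have : ∃ n, μr (s n) < ENNReal.ofReal t := by
    have h2 : (⨅ n, μr (s n)) < ENNReal.ofReal t := by
      rw [hkey]; exact ENNReal.ofReal_pos.mpr ht
    exact exists_lt_of_ciInf_lt h2
  obtain ⟨n, hn⟩ := this
  exact ⟨(n:ℝ)+1, by positivity, by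
    rwa [← ENNReal.lt_ofReal_iff_toReal_lt (mur_ne_top _)]⟩

lemma rearr_antitoneOn (f : ℝ → ℝ) (hf : Measurable f) : AntitoneOn (rearr f) (Ioi 0) := by
  intro t ht t' _ h
  exact csInf_le_csInf ⟨0, fun σ hσ => hσ.1.le⟩ (rset_nonempty f hf ht)
    (fun σ hσ => ⟨hσ.1, lt_of_lt_of_le hσ.2 h⟩)

lemma rearr_aemeasurable (f : ℝ → ℝ) (hf : Measurable f) : AEMeasurable (rearr f) μr :=
  aemeasurable_restrict_of_antitoneOn measurableSet_Ioo
    ((rearr_antitoneOn f hf).mono Ioo_subset_Ioi_self)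

lemma rearr_le_of_lt (f : ℝ → ℝ) {t σ' : ℝ} (h0 : 0 < σ')
    (h : (μr {x | σ' ≤ |f x|}).toReal < t) : rearr f t ≤ σ' :=
  csInf_le ⟨0, fun _ hσ => hσ.1.le⟩ ⟨h0, h⟩

lemma dist_bound (f : ℝ → ℝ) (hf : Measurable f) {σ : ℝ} (hσ : 0 < σ) :
    μr {t | σ ≤ rearr f t} ≤ μr {x | σ ≤ |f x|} := by
  have key : ∀ t : ℝ, 0 < t → σ ≤ rearr f t → ENNReal.ofReal t ≤ μr {x | σ ≤ |f x|} := by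
    intro t ht hle
    set s : ℕ → Set ℝ := fun n => {x | σ * (1 - 1/((n:ℝ)+2)) ≤ |f x|} with hs
    have hc : ∀ n : ℕ, (0:ℝ) < 1 - 1/((n:ℝ)+2) ∧ 1 - 1/((n:ℝ)+2) < 1 := by
      intro n
      have h2 : (0:ℝ) < (n:ℝ) + 2 := by positivity
      constructor
      · have : 1/((n:ℝ)+2) < 1 := by rw [div_lt_one h2]; linarith
        linarith
      · have : 0 < 1/((n:ℝ)+2) := by positivity
        linarith
    have h1 : ∀ n, ENNReal.ofReal t ≤ μr (s n) := by
      intro n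
      by_contra hcon
      push_neg at hcon
      have h2 : (μr (s n)).toReal < t := by
        rwa [← ENNReal.lt_ofReal_iff_toReal_lt (mur_ne_top _)]
      have h3 : rearr f t ≤ σ * (1 - 1/((n:ℝ)+2)) :=
        rearr_le_of_lt f (by have := (hc n).1; positivity) h2
      have h4 : σ * (1 - 1/((n:ℝ)+2)) < σ := by
        nlinarith [(hc n).1, (hc n).2]
      linarith
    have hanti : Antitone s := by
      intro n m hnm x hx
      simp only [hs, mem_setOf_eq] at hx ⊢
      have hm : (1:ℝ)/((n:ℝ)+2) ≥ 1/((m:ℝ)+2) := by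
        apply one_div_le_one_div_of_le (by positivity)
        have : (n:ℝ) ≤ (m:ℝ) := Nat.cast_le.mpr hnm
        linarith
      nlinarith
    have hiInter : ⋂ n, s n = {x | σ ≤ |f x|} := by
      ext x
      simp only [mem_iInter, hs, mem_setOf_eq]
      constructor
      · intro h
        have htend : Filter.Tendsto (fun n : ℕ => σ * (1 - 1/((n:ℝ)+2))) Filter.atTop
            (nhds (σ * (1 - 0))) := by
          apply Filter.Tendsto.const_mul
          apply Filter.Tendsto.const_sub
          exact tendsto_one_div_add_atTop_nhds_zero_nat.comp (Filter.tendsto_add_atTop_nat 1)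
            |>.congr (fun n => by simp only [Function.comp_apply]; push_cast; ring)
        simpa using le_of_tendsto' htend h
      · intro h n
        nlinarith [(hc n).1, (hc n).2, abs_nonneg (f x)]
    have := le_iInf h1
    rwa [← Antitone.measure_iInter hanti (fun n => (measurableSet_le measurable_const hf.abs).nullMeasurableSet) ⟨0, mur_ne_top _⟩, hiInter] at this
  calc μr {t | σ ≤ rearr f t}
      ≤ μr (Ioc 0 ((μr {x | σ ≤ |f x|}).toReal)) := by
        apply measure_mono
        intro t ht'
        simp only [mem_setOf_eq] at ht'
        have htpos : 0 < t := by
          by_contra hneg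
          push_neg at hneg
          have hempty : {σ' : ℝ | 0 < σ' ∧ (μr {x | σ' ≤ |f x|}).toReal < t} = ∅ := by
            ext σ'
            simp only [mem_setOf_eq, mem_empty_iff_false, iff_false, not_and, not_lt]
            intro _
            exact le_trans hneg ENNReal.toReal_nonneg
          have : rearr f t = 0 := by rw [rearr]; rw [hempty]; exact Real.sInf_empty
          rw [this] at ht'
          linarith
        have := key t htpos ht'
        exact ⟨htpos, (ENNReal.ofReal_le_iff_le_toReal (mur_ne_top _)).mp this⟩
    _ ≤ volume (Ioc 0 ((μr {x | σ ≤ |f x|}).toReal)) := Measure.restrict_le_self _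
    _ = ENNReal.ofReal ((μr {x | σ ≤ |f x|}).toReal) := by simp
    _ = μr {x | σ ≤ |f x|} := ENNReal.ofReal_toReal (mur_ne_top _)

lemma lint_rpow_le (f : ℝ → ℝ) (hf : Measurable f) {p : ℝ} (hp : 0 < p) :
    ∫⁻ t, ENNReal.ofReal (rearr f t ^ p) ∂μr ≤ ∫⁻ x, ENNReal.ofReal (|f x| ^ p) ∂μr := by
  rw [lintegral_rpow_eq_lintegral_meas_le_mul μr (Filter.Eventually.of_forall (rearr_nonneg f))
      (rearr_aemeasurable f hf) hp,
    lintegral_rpow_eq_lintegral_meas_le_mul μr (Filter.Eventually.of_forall fun x => abs_nonneg (f x))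
      hf.abs.aemeasurable hp]
  refine mul_le_mul_right ?_ _
  refine lintegral_mono_ae ?_
  filter_upwards [self_mem_ae_restrict (measurableSet_Ioi : MeasurableSet (Ioi (0:ℝ)))] with σ hσ
  exact mul_le_mul_left (dist_bound f hf hσ) _

lemma lint_ofReal_rpow (g : ℝ → ℝ) (hg : ∀ x, 0 ≤ g x) (q : ℝ) (hq : 0 ≤ q) (μ : Measure ℝ) :
    ∫⁻ x, (ENNReal.ofReal (g x)) ^ q ∂μ = ∫⁻ x, ENNReal.ofReal (g x ^ q) ∂μ :=
  lintegral_congr fun x => ENNReal.ofReal_rpow_of_nonneg (hg x) hq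

lemma nnnorm_coe_eq (x : ℝ) : (‖x‖₊ : ℝ≥0∞) = ENNReal.ofReal |x| :=
  Real.enorm_eq_ofReal_abs x

lemma eLp_eq (g : ℝ → ℝ) (hg : ∀ x, 0 ≤ g x) {p : ℝ} (hp : 0 < p) (μ : Measure ℝ) :
    eLpNorm g (ENNReal.ofReal p) μ = (∫⁻ x, (ENNReal.ofReal (g x)) ^ p ∂μ) ^ (1/p) := by
  rw [eLpNorm_eq_lintegral_rpow_enorm_toReal (by simpa using hp) ENNReal.ofReal_ne_top,
    ENNReal.toReal_ofReal hp.le]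
  congr 1
  refine lintegral_congr fun x => ?_
  rw [Real.enorm_eq_ofReal_abs, abs_of_nonneg (hg x)]

lemma eLp_rearr_le (f : ℝ → ℝ) (hf : Measurable f) {p : ℝ} (hp : 0 < p) :
    eLpNorm (rearr f) (ENNReal.ofReal p) μr ≤ eLpNorm f (ENNReal.ofReal p) μr := by
  rw [eLp_eq (rearr f) (rearr_nonneg f) hp,
    eLpNorm_eq_lintegral_rpow_enorm_toReal (by simpa using hp) ENNReal.ofReal_ne_top,
    ENNReal.toReal_ofReal hp.le]
  refine ENNReal.rpow_le_rpow ?_ (by positivity)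
  rw [lint_ofReal_rpow (rearr f) (rearr_nonneg f) p hp.le]
  calc ∫⁻ t, ENNReal.ofReal (rearr f t ^ p) ∂μr
      ≤ ∫⁻ x, ENNReal.ofReal (|f x| ^ p) ∂μr := lint_rpow_le f hf hp
    _ = ∫⁻ x, (‖f x‖₊ : ℝ≥0∞) ^ p ∂μr := by
        refine lintegral_congr fun x => ?_
        rw [nnnorm_coe_eq, ENNReal.ofReal_rpow_of_nonneg (abs_nonneg _) hp.le]

lemma holder_bound (f S : ℝ → ℝ) (hf : Measurable f) (hS : Measurable S) (hS0 : ∀ x, 0 ≤ S x)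
    {p : ℝ} (hp1 : 1 < p) :
    ∫⁻ t in Set.Ioo (0:ℝ) 1, ENNReal.ofReal (rearr f t * S t) ≤
      eLpNorm f (ENNReal.ofReal p) μr * eLpNorm S (ENNReal.ofReal (p/(p-1))) μr := by
  set q := p/(p-1) with hq
  have hpq : p.HolderConjugate q := Real.HolderConjugate.conjExponent hp1
  have hppos : 0 < p := by linarith
  have hqpos : 0 < q := hpq.symm.pos
  have h1 : ∫⁻ t in Set.Ioo (0:ℝ) 1, ENNReal.ofReal (rearr f t * S t) =
      ∫⁻ t, (fun t => ENNReal.ofReal (rearr f t)) t * (fun t => ENNReal.ofReal (S t)) t ∂μr :=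
    lintegral_congr fun t => ENNReal.ofReal_mul (rearr_nonneg f t)
  rw [h1]
  calc ∫⁻ t, (fun t => ENNReal.ofReal (rearr f t)) t * (fun t => ENNReal.ofReal (S t)) t ∂μr
      ≤ (∫⁻ t, (ENNReal.ofReal (rearr f t)) ^ p ∂μr) ^ (1/p) *
        (∫⁻ t, (ENNReal.ofReal (S t)) ^ q ∂μr) ^ (1/q) := by
        exact ENNReal.lintegral_mul_le_Lp_mul_Lq μr hpq
          (ENNReal.measurable_ofReal.comp_aemeasurable (rearr_aemeasurable f hf))
          (ENNReal.measurable_ofReal.comp hS).aemeasurable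
    _ = eLpNorm (rearr f) (ENNReal.ofReal p) μr * eLpNorm S (ENNReal.ofReal q) μr := by
        rw [eLp_eq (rearr f) (rearr_nonneg f) hppos, eLp_eq S hS0 hqpos]
    _ ≤ eLpNorm f (ENNReal.ofReal p) μr * eLpNorm S (ENNReal.ofReal q) μr :=
        mul_le_mul_left (eLp_rearr_le f hf hppos) _

lemma eLp_le_gls {Ω : Type*} [MeasurableSpace Ω] (μ : Measure Ω)
    (a : ℝ) (b : ℝ≥0∞) (ψ : ℝ → ℝ) (g : Ω → ℝ) {p : ℝ}
    (hp : a < p ∧ ENNReal.ofReal p < b) (hψp : 0 < ψ p) :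
    eLpNorm g (ENNReal.ofReal p) μ ≤ ENNReal.ofReal (ψ p) * glsNorm μ a b ψ g := by
  have h := le_iSup₂ (f := fun (p : ℝ) (_ : a < p ∧ ENNReal.ofReal p < b) =>
    eLpNorm g (ENNReal.ofReal p) μ / ENNReal.ofReal (ψ p)) p hp
  rw [glsNorm]
  have hne0 : ENNReal.ofReal (ψ p) ≠ 0 := (ENNReal.ofReal_pos.mpr hψp).ne'
  rw [ENNReal.div_le_iff_le_mul (Or.inl hne0) (Or.inl ENNReal.ofReal_ne_top)] at h
  calc eLpNorm g (ENNReal.ofReal p) μ ≤ _ * ENNReal.ofReal (ψ p) := h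
    _ = _ := mul_comm _ _

lemma exists_adm {a : ℝ} {b : ℝ≥0∞} (ha : 0 ≤ a) (hab : ENNReal.ofReal a < b) :
    ∃ p, a < p ∧ ENNReal.ofReal p < b := by
  rcases eq_or_ne b ⊤ with rfl | hb
  · exact ⟨a+1, by linarith, by simp⟩
  · have h := (ENNReal.ofReal_lt_iff_lt_toReal ha hb).mp hab
    refine ⟨(a + b.toReal)/2, by linarith, ?_⟩
    have h2 : (a+b.toReal)/2 < b.toReal := by linarith
    calc ENNReal.ofReal ((a + b.toReal)/2) < ENNReal.ofReal b.toReal :=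
          (ENNReal.ofReal_lt_ofReal_iff (by linarith)).mpr h2
      _ = b := ENNReal.ofReal_toReal hb

lemma gls_zero_ae {a : ℝ} {b : ℝ≥0∞} {ψ : ℝ → ℝ} {g : ℝ → ℝ} (hg : Measurable g)
    {p₀ : ℝ} (hp₀ : a < p₀ ∧ ENNReal.ofReal p₀ < b) (hp₀pos : 0 < p₀) (hψp₀ : 0 < ψ p₀)
    (h0 : glsNorm μr a b ψ g = 0) : g =ᵐ[μr] 0 := by
  have hterm : eLpNorm g (ENNReal.ofReal p₀) μr / ENNReal.ofReal (ψ p₀) = 0 :=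
    le_antisymm (h0 ▸ le_iSup₂ (f := fun (p:ℝ) (_ : a < p ∧ ENNReal.ofReal p < b) =>
      eLpNorm g (ENNReal.ofReal p) μr / ENNReal.ofReal (ψ p)) p₀ hp₀) zero_le
  have heLp : eLpNorm g (ENNReal.ofReal p₀) μr = 0 := by
    rcases ENNReal.div_eq_zero_iff.mp hterm with h | h
    · exact h
    · exact absurd h ENNReal.ofReal_ne_top
  exact (eLpNorm_eq_zero_iff hg.aestronglyMeasurable
    (by simpa using hp₀pos)).mp heLp

lemma rearr_of_ae_zero (f : ℝ → ℝ) (hf0 : f =ᵐ[μr] 0) {t : ℝ} (ht : 0 < t) :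
    rearr f t = 0 := by
  have hnull : μr {x | f x ≠ 0} = 0 := by
    have := hf0
    rw [Filter.EventuallyEq, ae_iff] at this
    simpa using this
  have hd : ∀ σ : ℝ, 0 < σ → μr {x | σ ≤ |f x|} = 0 := fun σ hσ =>
    measure_mono_null (fun x hx => by
      simp only [mem_setOf_eq] at hx ⊢
      intro h; rw [h] at hx; simp at hx; linarith) hnull
  have hset : {σ : ℝ | 0 < σ ∧ (μr {x | σ ≤ |f x|}).toReal < t} = Ioi 0 := by
    ext σ
    simp only [mem_setOf_eq, mem_Ioi]
    constructor
    · exact fun h => h.1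
    · intro h
      exact ⟨h, by rw [hd σ h]; simpa using ht⟩
  rw [rearr, hset]
  exact csInf_Ioi

/-- for generating functions `ψ ∈ GΨ(a,b)`, `ν ∈ GΨ(c,d)`, a measurable `f` on
`(0,1)` with finite `Gψ` norm and a nonnegative integrable `S` with finite `Gν` norm,
`‖f‖_{[S]} = ∫₀¹ f*(t) S(t) dt ≤ ζ · ‖f‖_{Gψ(a,b)} · ‖S‖_{Gν(c,d)}`, where
`ζ = inf{ψ(p)·ν(p') : p ∈ (a,b), p' = p/(p-1) ∈ (c,d)}` (inf over the empty set `= +∞`). -/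
theorem stmt6 (a : ℝ) (b : ℝ≥0∞) (c : ℝ) (d : ℝ≥0∞)
    (ha : 1 ≤ a) (hab : ENNReal.ofReal a < b) (hc : 1 ≤ c) (hcd : ENNReal.ofReal c < d)
    (ψ ν : ℝ → ℝ) (hψm : Measurable ψ) (hνm : Measurable ν)
    (hψ : ∃ ε > (0:ℝ), ∀ p : ℝ, a < p → ENNReal.ofReal p < b → ε ≤ ψ p)
    (hν : ∃ ε > (0:ℝ), ∀ q : ℝ, c < q → ENNReal.ofReal q < d → ε ≤ ν q)
    (f S : ℝ → ℝ) (hf : Measurable f) (hS : Measurable S) (hS0 : ∀ t, 0 ≤ S t)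
    (hSint : IntegrableOn S (Set.Ioo 0 1) volume)
    (hfG : glsNorm (volume.restrict (Set.Ioo (0:ℝ) 1)) a b ψ f < ⊤)
    (hSG : glsNorm (volume.restrict (Set.Ioo (0:ℝ) 1)) c d ν S < ⊤) :
    ∫⁻ t in Set.Ioo (0:ℝ) 1, ENNReal.ofReal (rearr f t * S t) ≤
      (⨅ (p : ℝ) (_ : a < p ∧ ENNReal.ofReal p < b ∧
          c < p / (p - 1) ∧ ENNReal.ofReal (p / (p - 1)) < d),
        ENNReal.ofReal (ψ p * ν (p / (p - 1)))) *
      glsNorm (volume.restrict (Set.Ioo (0:ℝ) 1)) a b ψ f *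
      glsNorm (volume.restrict (Set.Ioo (0:ℝ) 1)) c d ν S := by
  obtain ⟨εψ, hεψ, hψb⟩ := hψ
  obtain ⟨εν, hεν, hνb⟩ := hν
  by_cases hF0 : glsNorm (volume.restrict (Set.Ioo (0:ℝ) 1)) a b ψ f = 0
  · -- f = 0 a.e., so rearr f = 0 on (0,1), LHS = 0
    obtain ⟨p₀, hp₀⟩ := exists_adm (le_trans zero_le_one ha) hab
    have hf0 : f =ᵐ[μr] 0 :=
      gls_zero_ae hf hp₀ (by linarith [hp₀.1]) (lt_of_lt_of_le hεψ (hψb p₀ hp₀.1 hp₀.2)) hF0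
    have hz : ∀ t ∈ Set.Ioo (0:ℝ) 1, ENNReal.ofReal (rearr f t * S t) = (fun _ => (0:ℝ≥0∞)) t := by
      intro t ht
      rw [rearr_of_ae_zero f hf0 ht.1, zero_mul, ENNReal.ofReal_zero]
    rw [setLIntegral_congr_fun measurableSet_Ioo hz, lintegral_zero]
    exact zero_le
  by_cases hG0 : glsNorm (volume.restrict (Set.Ioo (0:ℝ) 1)) c d ν S = 0
  · -- S = 0 a.e., LHS = 0
    obtain ⟨q₀, hq₀⟩ := exists_adm (le_trans zero_le_one hc) hcd
    have hS0' : S =ᵐ[μr] 0 :=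
      gls_zero_ae hS hq₀ (by linarith [hq₀.1]) (lt_of_lt_of_le hεν (hνb q₀ hq₀.1 hq₀.2)) hG0
    have hz : (fun t => ENNReal.ofReal (rearr f t * S t)) =ᵐ[μr] (fun _ => (0:ℝ≥0∞)) := by
      filter_upwards [hS0'] with t ht
      simp only [Pi.zero_apply] at ht
      rw [ht, mul_zero, ENNReal.ofReal_zero]
    rw [lintegral_congr_ae hz, lintegral_zero]
    exact zero_le
  -- non-degenerate case
  set F := glsNorm (volume.restrict (Set.Ioo (0:ℝ) 1)) a b ψ f with hF
  set G := glsNorm (volume.restrict (Set.Ioo (0:ℝ) 1)) c d ν S with hG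
  have hK0 : F * G ≠ 0 := mul_ne_zero hF0 hG0
  have hKtop : F * G ≠ ⊤ := ENNReal.mul_ne_top hfG.ne hSG.ne
  rw [mul_assoc]
  set P : ℝ → Prop := fun p => a < p ∧ ENNReal.ofReal p < b ∧
    c < p / (p - 1) ∧ ENNReal.ofReal (p / (p - 1)) < d with hP
  have hrw : (⨅ (p : ℝ) (_ : P p), ENNReal.ofReal (ψ p * ν (p / (p - 1)))) * (F * G)
      = ⨅ (x : Subtype P), ENNReal.ofReal (ψ x.1 * ν (x.1 / (x.1 - 1))) * (F * G) := by
    rw [iInf_subtype']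
    exact ENNReal.iInf_mul_of_ne hK0 hKtop
  rw [hrw]
  refine le_iInf fun x => ?_
  obtain ⟨p, hp1, hp2, hp3, hp4⟩ := x
  have hpgt1 : 1 < p := lt_of_le_of_lt ha hp1
  have hψpos : 0 < ψ p := lt_of_lt_of_le hεψ (hψb p hp1 hp2)
  have hνpos : 0 < ν (p / (p - 1)) := lt_of_lt_of_le hεν (hνb _ hp3 hp4)
  calc ∫⁻ t in Set.Ioo (0:ℝ) 1, ENNReal.ofReal (rearr f t * S t)
      ≤ eLpNorm f (ENNReal.ofReal p) μr * eLpNorm S (ENNReal.ofReal (p/(p-1))) μr :=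
        holder_bound f S hf hS hS0 hpgt1
    _ ≤ (ENNReal.ofReal (ψ p) * F) * (ENNReal.ofReal (ν (p/(p-1))) * G) :=
        mul_le_mul' (eLp_le_gls μr a b ψ f ⟨hp1, hp2⟩ hψpos)
          (eLp_le_gls μr c d ν S ⟨hp3, hp4⟩ hνpos)
    _ = ENNReal.ofReal (ψ p * ν (p/(p-1))) * (F * G) := by
        rw [ENNReal.ofReal_mul hψpos.le]; ring
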